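/- Let b, c > 0, p > 1, t_max ∈ (0,∞], and let φ : [0,t_max) → ℝ be a C¹ function satisfying φ'(t) ≥ b·φ(t)^p − c for all t ∈ (0,t_max), and suppose b·φ(0)^p − c ≥ (b/2)·φ(0)^p and φ(0) > 0. Then φ'(t) ≥ (b/2)·φ(t)^p for all t ∈ (0,t_max), and consequently t_max < ∞. -/
import Mathlib


theorem stmt15 (b c p : ℝ) (hb : 0 < b) (hc : 0 < c) (hp : 1 < p)
    (tmax : EReal) (htmax : 0 < tmax) (φ φ' : ℝ → ℝ)
    (hderiv : ∀ t : ℝ, 0 ≤ t → (t : EReal) < tmax → HasDerivAt φ (φ' t) t)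
    (hφ'cont : ContinuousOn φ' {t : ℝ | 0 ≤ t ∧ (t : EReal) < tmax})
    (hODI : ∀ t : ℝ, 0 < t → (t : EReal) < tmax → b * φ t ^ p - c ≤ φ' t)
    (hinit : b / 2 * φ 0 ^ p ≤ b * φ 0 ^ p - c) (hφ0 : 0 < φ 0) :
    (∀ t : ℝ, 0 < t → (t : EReal) < tmax → b / 2 * φ t ^ p ≤ φ' t) ∧
      tmax < ⊤ := by
  have hp0 : (0 : ℝ) < p := lt_trans one_pos hp
  set A : ℝ := (2 * c / b) ^ (1 / p) with hAdef
  have h2cb : (0 : ℝ) < 2 * c / b := by positivity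
  have hApos : 0 < A := Real.rpow_pos_of_pos h2cb _
  have hAp : A ^ p = 2 * c / b := by
    rw [hAdef, one_div, Real.rpow_inv_rpow h2cb.le (ne_of_gt hp0)]
  -- initial bound
  have h1 : 2 * c / b ≤ φ 0 ^ p := by
    rw [div_le_iff₀ hb]
    nlinarith [hinit]
  have hφ0A : A ≤ φ 0 := by
    calc A ≤ (φ 0 ^ p) ^ (1 / p) :=
          Real.rpow_le_rpow h2cb.le h1 (by positivity)
      _ = φ 0 := by rw [one_div, Real.rpow_rpow_inv hφ0.le (ne_of_gt hp0)]
  set B : ℝ := (c / b) ^ (1 / p) with hBdef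
  have hcb : (0 : ℝ) < c / b := by positivity
  have hBpos : 0 < B := Real.rpow_pos_of_pos hcb _
  have hBp : B ^ p = c / b := by
    rw [hBdef, one_div, Real.rpow_inv_rpow hcb.le (ne_of_gt hp0)]
  have hBA : B < A :=
    Real.rpow_lt_rpow hcb.le (by rw [div_lt_div_iff₀ hb hb]; nlinarith) (by positivity)
  -- key claim: φ stays above A
  have key : ∀ t : ℝ, 0 ≤ t → (t : EReal) < tmax → A ≤ φ t := by
    intro t ht htm
    by_contra hcon
    push_neg at hcon
    have ht0 : t ≠ 0 := by
      intro h; rw [h] at hcon; exact absurd hφ0A (not_le.mpr hcon)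
    have htpos : 0 < t := lt_of_le_of_ne ht (Ne.symm ht0)
    have hcontIcc : ContinuousOn φ (Set.Icc 0 t) := by
      intro u hu
      have humem : (u : EReal) < tmax :=
        lt_of_le_of_lt (EReal.coe_le_coe_iff.mpr hu.2) htm
      exact ((hderiv u hu.1 humem).continuousAt).continuousWithinAt
    set K : Set ℝ := Set.Icc 0 t ∩ φ ⁻¹' Set.Ici A with hKdef
    have hKne : K.Nonempty := ⟨0, ⟨le_refl 0, ht⟩, hφ0A⟩
    have hKclosed : IsClosed K :=
      hcontIcc.preimage_isClosed_of_isClosed isClosed_Icc isClosed_Ici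
    have hKcompact : IsCompact K :=
      isCompact_Icc.of_isClosed_subset hKclosed Set.inter_subset_left
    set s : ℝ := sSup K with hsdef
    have hsK : s ∈ K := hKcompact.sSup_mem hKne
    have hs0 : 0 ≤ s := hsK.1.1
    have hsle : s ≤ t := hsK.1.2
    have hφs : A ≤ φ s := hsK.2
    have hst : s < t := by
      rcases lt_or_eq_of_le hsle with h | h
      · exact h
      · exact absurd (h ▸ hφs) (not_le.mpr hcon)
    have hstm : (s : EReal) < tmax :=
      lt_of_le_of_lt (EReal.coe_le_coe_iff.mpr hsle) htm
    have hconts : ContinuousAt φ s := (hderiv s hs0 hstm).continuousAt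
    have hev : ∀ᶠ u in nhds s, B < φ u :=
      hconts.eventually (eventually_gt_nhds (lt_of_lt_of_le hBA hφs))
    rw [Metric.eventually_nhds_iff] at hev
    obtain ⟨δ, hδpos, hδ⟩ := hev
    set t₁ : ℝ := min (s + δ / 2) t with ht₁def
    have hst₁ : s < t₁ := lt_min (by linarith) hst
    have ht₁t : t₁ ≤ t := min_le_right _ _
    have hsub : Set.Icc s t₁ ⊆ Set.Icc 0 t := fun u hu =>
      ⟨le_trans hs0 hu.1, le_trans hu.2 ht₁t⟩
    have hmono : MonotoneOn φ (Set.Icc s t₁) := by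
      apply monotoneOn_of_deriv_nonneg (convex_Icc s t₁) (hcontIcc.mono hsub)
      · intro u hu
        rw [interior_Icc] at hu
        have hu0 : 0 ≤ u := le_trans hs0 hu.1.le
        have hum : (u : EReal) < tmax :=
          lt_of_le_of_lt (EReal.coe_le_coe_iff.mpr (le_trans hu.2.le ht₁t)) htm
        exact ((hderiv u hu0 hum).differentiableAt).differentiableWithinAt
      · intro u hu
        rw [interior_Icc] at hu
        have hu0 : 0 < u := lt_of_le_of_lt hs0 hu.1
        have hum : (u : EReal) < tmax :=
          lt_of_le_of_lt (EReal.coe_le_coe_iff.mpr (le_trans hu.2.le ht₁t)) htm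
        rw [(hderiv u hu0.le hum).deriv]
        have hBu : B < φ u := by
          apply hδ
          rw [Real.dist_eq, abs_of_nonneg (by linarith [hu.1])]
          have : u < s + δ / 2 := lt_of_lt_of_le hu.2 (min_le_left _ _)
          linarith
        have hpow : B ^ p < φ u ^ p := Real.rpow_lt_rpow hBpos.le hBu hp0
        rw [hBp] at hpow
        have : c < b * φ u ^ p := by
          rw [div_lt_iff₀ hb] at hpow; linarith
        linarith [hODI u hu0 hum]
    have hφt₁ : A ≤ φ t₁ :=
      le_trans hφs (hmono ⟨le_refl s, hst₁.le⟩ ⟨hst₁.le, le_refl t₁⟩ hst₁.le)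
    have ht₁K : t₁ ∈ K := ⟨⟨le_trans hs0 hst₁.le, ht₁t⟩, hφt₁⟩
    have : t₁ ≤ s := le_csSup hKcompact.bddAbove ht₁K
    linarith
  -- Part 1
  have part1 : ∀ t : ℝ, 0 < t → (t : EReal) < tmax → b / 2 * φ t ^ p ≤ φ' t := by
    intro t ht htm
    have hA : A ≤ φ t := key t ht.le htm
    have hpow : A ^ p ≤ φ t ^ p := Real.rpow_le_rpow hApos.le hA hp0.le
    rw [hAp] at hpow
    have hcφ : c ≤ b / 2 * φ t ^ p := by
      rw [div_le_iff₀ hb] at hpow; nlinarith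
    linarith [hODI t ht htm]
  refine ⟨part1, ?_⟩
  -- Part 2 : tmax < ⊤
  by_contra htop
  have htmaxtop : tmax = ⊤ := top_le_iff.mp (not_lt.mp htop)
  have hall : ∀ u : ℝ, (u : EReal) < tmax := fun u => htmaxtop ▸ EReal.coe_lt_top u
  set c2 : ℝ := (p - 1) * b / 2 with hc2def
  have hc2pos : 0 < c2 := by
    have h : 0 < p - 1 := by linarith
    positivity
  have hφpos : ∀ u : ℝ, 0 ≤ u → 0 < φ u := fun u hu =>
    lt_of_lt_of_le hApos (key u hu (hall u))
  set g : ℝ → ℝ := fun u => φ u ^ (1 - p) + c2 * u with hgdef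
  have hg : ∀ u : ℝ, 0 ≤ u →
      HasDerivAt g (φ' u * (1 - p) * φ u ^ (1 - p - 1) + c2) u := by
    intro u hu
    have h2 : HasDerivAt (fun y : ℝ => c2 * y) c2 u := by
      simpa using (hasDerivAt_id u).const_mul c2
    exact ((hderiv u hu (hall u)).rpow_const (Or.inl (hφpos u hu).ne')).add h2
  have hanti : AntitoneOn g (Set.Ici 0) := by
    apply antitoneOn_of_deriv_nonpos (convex_Ici 0)
    · intro u hu
      exact ((hg u hu).continuousAt).continuousWithinAt
    · intro u hu
      rw [interior_Ici] at hu
      exact ((hg u (le_of_lt hu)).differentiableAt).differentiableWithinAt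
    · intro u hu
      rw [interior_Ici] at hu
      rw [(hg u hu.le).deriv]
      have hφu : 0 < φ u := hφpos u hu.le
      have hd : b / 2 * φ u ^ p ≤ φ' u := part1 u hu (hall u)
      have hxpos : (0:ℝ) < φ u ^ (1 - p - 1) := Real.rpow_pos_of_pos hφu _
      have hmul : φ u ^ (1 - p - 1) * φ u ^ p = φ u ^ (1 - p - 1 + p) :=
        (Real.rpow_add hφu _ _).symm
      have h0 : (1 : ℝ) - p - 1 + p = 0 := by ring
      rw [h0, Real.rpow_zero] at hmul
      have h1p : (1 : ℝ) - p < 0 := by linarith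
      -- φ' u * (1 - p) ≤ b/2 * φ u ^ p * (1 - p)
      have : φ' u * (1 - p) * φ u ^ (1 - p - 1) ≤
          b / 2 * φ u ^ p * (1 - p) * φ u ^ (1 - p - 1) := by
        apply mul_le_mul_of_nonneg_right _ hxpos.le
        nlinarith
      have heq : b / 2 * φ u ^ p * (1 - p) * φ u ^ (1 - p - 1) = -c2 := by
        have : b / 2 * φ u ^ p * (1 - p) * φ u ^ (1 - p - 1)
            = b / 2 * (1 - p) * (φ u ^ (1 - p - 1) * φ u ^ p) := by ring
        rw [this, hmul, hc2def]; ring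
      linarith [this, heq ▸ this]
  -- apply antitonicity at a large time
  set T : ℝ := φ 0 ^ (1 - p) / c2 + 1 with hTdef
  have hψ0pos : 0 < φ 0 ^ (1 - p) := Real.rpow_pos_of_pos hφ0 _
  have hT0 : (0 : ℝ) ≤ T := by positivity
  have hgT : g T ≤ g 0 := hanti (Set.mem_Ici.mpr le_rfl) (Set.mem_Ici.mpr hT0) hT0
  have hψTpos : 0 < φ T ^ (1 - p) := Real.rpow_pos_of_pos (hφpos T hT0) _
  have hc2T : c2 * T = φ 0 ^ (1 - p) + c2 := by
    rw [hTdef]; field_simp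
  simp only [hgdef] at hgT
  rw [mul_zero, add_zero] at hgT
  nlinarith [hgT, hc2T, hψTpos]
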